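/- Vacuum property characterization: let v be a potential on finite subsets of ℤ defined by v(A,ξ) = ∑_{V ⊆ A} (−1)^{|A\V|} H_V(ξ) where H_V(ξ) depends only on ξ restricted to V and satisfies H_V(ξ) = H_{V\{i\}}(ξ) whenever i ∈ V and ξ(i) = +1. Then v(A, ξ) = 0 whenever there exists i ∈ A with ξ(i) = +1. -/
import Mathlib


/-- Vacuum property of the vacuum potential (Section 3): if each `H V` depends
only on the coordinates in `V` and is insensitive to removing a site where the
configuration is `+1`, then the Möbius transform
`v(A,ξ) = ∑_{V ⊆ A} (−1)^{|A\V|} H_V(ξ)` vanishes as soon as `ξ(i) = +1` for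
some `i ∈ A`. -/
theorem stmt_18 (H : Finset ℤ → (ℤ → ℤ) → ℝ)
    (hlocal : ∀ (V : Finset ℤ) (ξ ξ' : ℤ → ℤ), (∀ x ∈ V, ξ x = ξ' x) → H V ξ = H V ξ')
    (hdrop : ∀ (V : Finset ℤ) (i : ℤ) (ξ : ℤ → ℤ), i ∈ V → ξ i = 1 →
      H V ξ = H (V.erase i) ξ)
    (v : Finset ℤ → (ℤ → ℤ) → ℝ)
    (hv : ∀ (A : Finset ℤ) (ξ : ℤ → ℤ),
      v A ξ = ∑ V ∈ A.powerset, (-1 : ℝ) ^ (A \ V).card * H V ξ) :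
    ∀ (A : Finset ℤ) (ξ : ℤ → ℤ) (i : ℤ), i ∈ A → ξ i = 1 → v A ξ = 0 := by
  intro A ξ i hiA hξ
  rw [hv]
  set s := A.erase i with hs
  have hi : i ∉ s := Finset.notMem_erase i A
  have hA : A = insert i s := (Finset.insert_erase hiA).symm
  rw [hA, Finset.sum_powerset_insert hi]
  rw [← Finset.sum_add_distrib]
  apply Finset.sum_eq_zero
  intro V hV
  rw [Finset.mem_powerset] at hV
  have hiV : i ∉ V := fun h => hi (hV h)
  have hH : H (insert i V) ξ = H V ξ := by
    have := hdrop (insert i V) i ξ (Finset.mem_insert_self i V) hξ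
    rwa [Finset.erase_insert hiV] at this
  have h1 : insert i s \ V = insert i (s \ V) :=
    Finset.insert_sdiff_of_notMem s hiV
  have h2 : insert i s \ insert i V = s \ V := by
    ext x
    simp only [Finset.mem_sdiff, Finset.mem_insert]
    constructor
    · rintro ⟨hx1 | hx1, hx2⟩
      · exact absurd (Or.inl hx1) hx2
      · exact ⟨hx1, fun h => hx2 (Or.inr h)⟩
    · rintro ⟨hx1, hx2⟩
      exact ⟨Or.inr hx1, fun h => h.elim (fun he => hi (he ▸ hx1)) hx2⟩
  have hcard : (insert i s \ V).card = (s \ V).card + 1 := by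
    rw [h1, Finset.card_insert_of_notMem (fun h => hi (Finset.mem_sdiff.mp h).1)]
  rw [hH, h2, hcard, pow_succ]
  ring
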